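/- Let G be a d-regular graph on n vertices and let the assignment Z be i.i.d. vertex randomization: each vertex is independently treated with probability p ∈ (0,1). Use full neighborhood exposure, and suppose the response functions are constant on each exposure event with values Y_i(σ^1_i), Y_i(σ^0_i) ∈ [Y_m, Y_M] where 0 < Y_m. Then the Horvitz–Thompson estimator satisfies Var[τ̂(Z)] ≥ (Y_m²/n)·( p^{−(d+1)} + (1−p)^{−(d+1)} − 2 ). -/

import Mathlib

open Finset
open scoped Classical
set_option maxHeartbeats 1000000

noncomputable section

/-- Probability weight of a coin vector of independent Bernoulli(p) cluster coins. -/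
def coinWt (p : ℝ) {J : Type*} [Fintype J] (x : J → Bool) : ℝ :=
  ∏ j, if x j then p else 1 - p

/-- Probability of an event `A` of assignment vectors under cluster randomization. -/
def clusterPr {V : Type*} [Fintype V] {J : Type*} [Fintype J]
    (p : ℝ) (c : V → J) (A : Set (V → Bool)) : ℝ :=
  ∑ x : J → Bool, coinWt p x * (if (fun v => x (c v)) ∈ A then 1 else 0)

/-- The Horvitz–Thompson estimator. -/
def htEst {V : Type*} [Fintype V] (pr : Set (V → Bool) → ℝ)
    (σ1 σ0 : V → Set (V → Bool)) (Y : V → (V → Bool) → ℝ) (z : V → Bool) : ℝ :=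
  (Fintype.card V : ℝ)⁻¹ *
    ∑ i : V, ((if z ∈ σ1 i then Y i z else 0) / pr (σ1 i)
      - (if z ∈ σ0 i then Y i z else 0) / pr (σ0 i))

/-- Variance of the Horvitz–Thompson estimator under cluster randomization. -/
def clusterVar {V : Type*} [Fintype V] {J : Type*} [Fintype J]
    (p : ℝ) (c : V → J) (σ1 σ0 : V → Set (V → Bool)) (Y : V → (V → Bool) → ℝ) : ℝ :=
  (∑ x : J → Bool, coinWt p x *
      (htEst (clusterPr p c) σ1 σ0 Y (fun v => x (c v))) ^ 2)
  - (∑ x : J → Bool, coinWt p x *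
      htEst (clusterPr p c) σ1 σ0 Y (fun v => x (c v))) ^ 2

/-- Full neighborhood exposure to condition `b`. -/
def fullExp {V : Type*} [Fintype V] (G : SimpleGraph V) (b : Bool) (v : V) :
    Set (V → Bool) :=
  {z | z v = b ∧ ∀ u ∈ G.neighborFinset v, z u = b}

section Aux
variable {V : Type*} [Fintype V]

lemma sum_prod_bool (f : V → Bool → ℝ) :
    ∑ x : V → Bool, ∏ v, f v (x v) = ∏ v, (f v true + f v false) := by
  classical
  rw [show (∏ v, (f v true + f v false)) = ∏ v, ∑ b : Bool, f v b by
    apply Finset.prod_congr rfl; intros; rw [Fintype.sum_bool]]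
  rw [Fintype.prod_sum]

/-- indicator that all coords in `S` equal `b`. -/
def indA (S : Finset V) (b : Bool) (x : V → Bool) : ℝ :=
  if ∀ v ∈ S, x v = b then 1 else 0

lemma indA_eq_prod (S : Finset V) (b : Bool) (x : V → Bool) :
    indA S b x = ∏ v, (if v ∈ S then (if x v = b then (1:ℝ) else 0) else 1) := by
  rw [Fintype.prod_ite_mem, Finset.prod_boole, indA]
  split_ifs with h1 h2 <;> first | rfl | exact absurd h1 h2 | exact absurd h2 h1

lemma evalProd (U : Finset V) (r : ℝ) :
    ∏ v, (if v ∈ U then r else 1) = r ^ U.card := by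
  rw [Fintype.prod_ite_mem, Finset.prod_const]

lemma expect_two (p : ℝ) (S T : Finset V) (b c : Bool) :
    ∑ x : V → Bool, coinWt p x * (indA S b x * indA T c x)
      = ∏ v, (p * ((if v ∈ S then (if b then (1:ℝ) else 0) else 1)
                 * (if v ∈ T then (if c then (1:ℝ) else 0) else 1))
        + (1-p) * ((if v ∈ S then (if b then (0:ℝ) else 1) else 1)
                 * (if v ∈ T then (if c then (0:ℝ) else 1) else 1))) := by
  have key := sum_prod_bool (fun v t => (if t then p else 1 - p) *
    ((if v ∈ S then (if t = b then (1:ℝ) else 0) else 1) *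
     (if v ∈ T then (if t = c then (1:ℝ) else 0) else 1)))
  have lhs : ∀ x : V → Bool, coinWt p x * (indA S b x * indA T c x)
      = ∏ v, ((if x v then p else 1 - p) *
        ((if v ∈ S then (if x v = b then (1:ℝ) else 0) else 1) *
         (if v ∈ T then (if x v = c then (1:ℝ) else 0) else 1))) := by
    intro x
    rw [indA_eq_prod, indA_eq_prod, coinWt, ← Finset.prod_mul_distrib,
      ← Finset.prod_mul_distrib]
  rw [Finset.sum_congr rfl (fun x _ => lhs x), key]
  apply Finset.prod_congr rfl
  intro v _
  cases b <;> cases c <;> simp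

lemma expect_same (p : ℝ) (S T : Finset V) (b : Bool) :
    ∑ x : V → Bool, coinWt p x * (indA S b x * indA T b x)
      = (if b then p else 1-p) ^ (S ∪ T).card := by
  rw [expect_two, ← evalProd (S ∪ T) (if b then p else 1-p)]
  apply Finset.prod_congr rfl
  intro v _
  by_cases hS : v ∈ S <;> by_cases hT : v ∈ T <;>
    cases b <;> simp [hS, hT, Finset.mem_union]

lemma expect_one (p : ℝ) (S : Finset V) (b : Bool) :
    ∑ x : V → Bool, coinWt p x * indA S b x
      = (if b then p else 1-p) ^ S.card := by
  have h := expect_same p S S b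
  rw [Finset.union_self] at h
  rw [← h]
  apply Finset.sum_congr rfl
  intro x _
  have : indA S b x * indA S b x = indA S b x := by
    unfold indA; split_ifs <;> ring
  rw [this]

lemma expect_mixed (p : ℝ) (S T : Finset V) :
    ∑ x : V → Bool, coinWt p x * (indA S true x * indA T false x)
      = if Disjoint S T then p ^ S.card * (1-p) ^ T.card else 0 := by
  rw [expect_two]
  by_cases hD : Disjoint S T
  · rw [if_pos hD, ← evalProd S p, ← evalProd T (1-p), ← Finset.prod_mul_distrib]
    apply Finset.prod_congr rfl
    intro v _
    by_cases hS : v ∈ S <;> by_cases hT : v ∈ T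
    · exact absurd (hD.forall_ne_finset hS hT rfl) (fun h => h)
    all_goals simp [hS, hT]
  · rw [if_neg hD]
    obtain ⟨v0, hv0⟩ : ∃ v, v ∈ S ∧ v ∈ T := by
      rw [Finset.not_disjoint_iff] at hD; exact hD
    apply Finset.prod_eq_zero (Finset.mem_univ v0)
    simp [hv0.1, hv0.2]

end Aux

/-- **Exponential variance lower bound under i.i.d. vertex randomization,
regular case.**  Let `G` be `d`-regular on `n` vertices, let each vertex be
independently treated with probability `p ∈ (0,1)` (cluster randomization with
the identity cluster map), use full neighborhood exposure, and let the responses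
be constant on each exposure event with values in `[Y_m, Y_M]`, `Y_m > 0`.  Then
`Var[τ̂(Z)] ≥ (Y_m²/n)·(p^{−(d+1)} + (1−p)^{−(d+1)} − 2)`. -/
theorem statement17 {V : Type*} [Fintype V] (G : SimpleGraph V)
    (d : ℕ) (hreg : ∀ v, G.degree v = d)
    (p : ℝ) (hp : p ∈ Set.Ioo (0:ℝ) 1)
    (Ym YM : ℝ) (hYm : 0 < Ym)
    (Y : V → (V → Bool) → ℝ) (Y1 Y0 : V → ℝ)
    (hY1 : ∀ i, Y1 i ∈ Set.Icc Ym YM) (hY0 : ∀ i, Y0 i ∈ Set.Icc Ym YM)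
    (hc1 : ∀ i, ∀ z ∈ fullExp G true i, Y i z = Y1 i)
    (hc0 : ∀ i, ∀ z ∈ fullExp G false i, Y i z = Y0 i) :
    Ym ^ 2 / (Fintype.card V : ℝ) *
        ((p ^ (d + 1))⁻¹ + ((1 - p) ^ (d + 1))⁻¹ - 2)
      ≤ clusterVar p (id : V → V) (fullExp G true) (fullExp G false) Y := by
  classical
  obtain ⟨hp0, hp1⟩ := hp
  have hq0 : (0:ℝ) < 1 - p := by linarith
  rcases isEmpty_or_nonempty V with hV | hV
  · simp [clusterVar, htEst, Fintype.card_eq_zero]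
  -- setup
  have hn0 : (0:ℝ) < (Fintype.card V : ℝ) := by
    exact_mod_cast Fintype.card_pos
  set π1 : ℝ := p ^ (d+1) with hπ1def
  set π0 : ℝ := (1-p) ^ (d+1) with hπ0def
  have hπ1 : 0 < π1 := pow_pos hp0 _
  have hπ0 : 0 < π0 := pow_pos hq0 _
  have hπ1le : π1 ≤ 1 := pow_le_one₀ hp0.le hp1.le
  have hπ0le : π0 ≤ 1 := pow_le_one₀ hq0.le (by linarith)
  set N : V → Finset V := fun i => insert i (G.neighborFinset i) with hN
  have hNcard : ∀ i, (N i).card = d + 1 := by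
    intro i
    rw [hN]
    simp only
    rw [Finset.card_insert_of_notMem (G.notMem_neighborFinset_self i),
      G.card_neighborFinset_eq_degree, hreg i]
  have hmem : ∀ (b : Bool) i (x : V → Bool),
      x ∈ fullExp G b i ↔ ∀ v ∈ N i, x v = b := by
    intro b i x
    simp [fullExp, hN, Finset.forall_mem_insert]
  have hind : ∀ (b : Bool) i (x : V → Bool),
      (if x ∈ fullExp G b i then (1:ℝ) else 0) = indA (N i) b x := by
    intro b i x
    rw [indA]
    exact if_congr (hmem b i x) rfl rfl
  -- probabilities of exposure events
  have hpr1 : ∀ i, clusterPr p (id : V → V) (fullExp G true i) = π1 := by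
    intro i
    unfold clusterPr
    simp only [id_eq]
    rw [Finset.sum_congr rfl (fun x _ => by rw [hind true i x]), expect_one,
      hNcard i]
    simp [hπ1def]
  have hpr0 : ∀ i, clusterPr p (id : V → V) (fullExp G false i) = π0 := by
    intro i
    unfold clusterPr
    simp only [id_eq]
    rw [Finset.sum_congr rfl (fun x _ => by rw [hind false i x]), expect_one,
      hNcard i]
    simp [hπ0def]
  -- the centered summands
  set t : V → (V → Bool) → ℝ := fun i x =>
    Y1 i / π1 * indA (N i) true x - Y0 i / π0 * indA (N i) false x with ht
  have hT : ∀ x : V → Bool,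
      htEst (clusterPr p (id : V → V)) (fullExp G true) (fullExp G false) Y
          (fun v => x (id v))
        = (Fintype.card V : ℝ)⁻¹ * ∑ i, t i x := by
    intro x
    unfold htEst
    simp only [id_eq]
    congr 1
    apply Finset.sum_congr rfl
    intro i _
    rw [hpr1 i, hpr0 i]
    have h1 : (if x ∈ fullExp G true i then Y i x else 0)
        = Y1 i * indA (N i) true x := by
      by_cases hx : x ∈ fullExp G true i
      · rw [if_pos hx, hc1 i x hx, indA, if_pos ((hmem true i x).mp hx), mul_one]
      · rw [if_neg hx, indA, if_neg (fun h => hx ((hmem true i x).mpr h)), mul_zero]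
    have h0 : (if x ∈ fullExp G false i then Y i x else 0)
        = Y0 i * indA (N i) false x := by
      by_cases hx : x ∈ fullExp G false i
      · rw [if_pos hx, hc0 i x hx, indA, if_pos ((hmem false i x).mp hx), mul_one]
      · rw [if_neg hx, indA, if_neg (fun h => hx ((hmem false i x).mpr h)), mul_zero]
    rw [h1, h0, ht]
    ring
  -- moments
  set PP : V → V → ℝ := fun i j =>
    ∑ x : V → Bool, coinWt p x * (indA (N i) true x * indA (N j) true x) with hPP
  set MM : V → V → ℝ := fun i j =>
    ∑ x : V → Bool, coinWt p x * (indA (N i) false x * indA (N j) false x) with hMM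
  set PM : V → V → ℝ := fun i j =>
    ∑ x : V → Bool, coinWt p x * (indA (N i) true x * indA (N j) false x) with hPM
  have hPPval : ∀ i j, PP i j = p ^ (N i ∪ N j).card := by
    intro i j; rw [hPP]; simp only
    rw [expect_same]; simp
  have hMMval : ∀ i j, MM i j = (1-p) ^ (N i ∪ N j).card := by
    intro i j; rw [hMM]; simp only
    rw [expect_same]; simp
  have hPMval : ∀ i j, PM i j
      = if Disjoint (N i) (N j) then π1 * π0 else 0 := by
    intro i j; rw [hPM]; simp only
    rw [expect_mixed, hNcard i, hNcard j, hπ1def, hπ0def]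
  have hPPge : ∀ i j, π1 ^ 2 ≤ PP i j := by
    intro i j
    rw [hPPval i j, hπ1def, ← pow_mul]
    apply pow_le_pow_of_le_one hp0.le hp1.le
    calc (N i ∪ N j).card ≤ (N i).card + (N j).card := Finset.card_union_le _ _
      _ = (d+1) * 2 := by rw [hNcard i, hNcard j]; ring
  have hMMge : ∀ i j, π0 ^ 2 ≤ MM i j := by
    intro i j
    rw [hMMval i j, hπ0def, ← pow_mul]
    apply pow_le_pow_of_le_one hq0.le (by linarith)
    calc (N i ∪ N j).card ≤ (N i).card + (N j).card := Finset.card_union_le _ _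
      _ = (d+1) * 2 := by rw [hNcard i, hNcard j]; ring
  have hPMle : ∀ i j, PM i j ≤ π1 * π0 := by
    intro i j
    rw [hPMval i j]
    split_ifs
    · exact le_rfl
    · exact le_of_lt (mul_pos hπ1 hπ0)
  have hPPdiag : ∀ i, PP i i = π1 := by
    intro i; rw [hPPval i i, Finset.union_self, hNcard i, hπ1def]
  have hMMdiag : ∀ i, MM i i = π0 := by
    intro i; rw [hMMval i i, Finset.union_self, hNcard i, hπ0def]
  have hPMdiag : ∀ i, PM i i = 0 := by
    intro i
    rw [hPMval i i, if_neg]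
    intro hD
    exact absurd (hD.forall_ne_finset (Finset.mem_insert_self i _)
      (Finset.mem_insert_self i _) rfl) (fun h => h)
  -- first moments
  have hE1 : ∀ i, ∑ x : V → Bool, coinWt p x * indA (N i) true x = π1 := by
    intro i; rw [expect_one, hNcard i]; simp [hπ1def]
  have hE0 : ∀ i, ∑ x : V → Bool, coinWt p x * indA (N i) false x = π0 := by
    intro i; rw [expect_one, hNcard i]; simp [hπ0def]
  set e : V → ℝ := fun i => ∑ x : V → Bool, coinWt p x * t i x with he
  have heval : ∀ i, e i = Y1 i - Y0 i := by
    intro i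
    rw [he]; simp only [ht]
    have : ∀ x : V → Bool, coinWt p x *
        (Y1 i / π1 * indA (N i) true x - Y0 i / π0 * indA (N i) false x)
        = Y1 i / π1 * (coinWt p x * indA (N i) true x)
          - Y0 i / π0 * (coinWt p x * indA (N i) false x) := by
      intro x; ring
    rw [Finset.sum_congr rfl (fun x _ => this x), Finset.sum_sub_distrib,
      ← Finset.mul_sum, ← Finset.mul_sum, hE1 i, hE0 i,
      div_mul_cancel₀ _ hπ1.ne', div_mul_cancel₀ _ hπ0.ne']
  set M : V → V → ℝ := fun i j =>
    ∑ x : V → Bool, coinWt p x * (t i x * t j x) with hM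
  have hMval : ∀ i j, M i j
      = Y1 i / π1 * (Y1 j / π1) * PP i j
        - Y1 i / π1 * (Y0 j / π0) * PM i j
        - Y0 i / π0 * (Y1 j / π1) * PM j i
        + Y0 i / π0 * (Y0 j / π0) * MM i j := by
    intro i j
    rw [hM]; simp only [ht, hPP, hMM, hPM]
    rw [Finset.mul_sum, Finset.mul_sum, Finset.mul_sum, Finset.mul_sum,
      ← Finset.sum_sub_distrib, ← Finset.sum_sub_distrib, ← Finset.sum_add_distrib]
    apply Finset.sum_congr rfl
    intro x _
    ring
  -- per-pair lower bound
  set D : ℝ := Ym ^ 2 * (π1⁻¹ + π0⁻¹ - 2) with hD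
  have key : ∀ i j, (if i = j then D else 0) ≤ M i j - e i * e j := by
    intro i j
    obtain ⟨hY1m, hY1M⟩ := hY1 i
    obtain ⟨hY1m', _⟩ := hY1 j
    obtain ⟨hY0m, hY0M⟩ := hY0 i
    obtain ⟨hY0m', _⟩ := hY0 j
    have hY1i : 0 < Y1 i := lt_of_lt_of_le hYm hY1m
    have hY1j : 0 < Y1 j := lt_of_lt_of_le hYm hY1m'
    have hY0i : 0 < Y0 i := lt_of_lt_of_le hYm hY0m
    have hY0j : 0 < Y0 j := lt_of_lt_of_le hYm hY0m'
    rw [hMval i j, heval i, heval j]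
    by_cases hij : i = j
    · subst hij
      rw [if_pos rfl, hPPdiag i, hMMdiag i, hPMdiag i, hD]
      have heq : Y1 i / π1 * (Y1 i / π1) * π1 - Y1 i / π1 * (Y0 i / π0) * 0
            - Y0 i / π0 * (Y1 i / π1) * 0 + Y0 i / π0 * (Y0 i / π0) * π0
            - (Y1 i - Y0 i) * (Y1 i - Y0 i)
          = Y1 i ^ 2 * (π1⁻¹ - 1) + Y0 i ^ 2 * (π0⁻¹ - 1) + 2 * (Y1 i * Y0 i) := by
        field_simp
        ring
      rw [heq]
      have h1 : Ym ^ 2 * (π1⁻¹ - 1) ≤ Y1 i ^ 2 * (π1⁻¹ - 1) := by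
        apply mul_le_mul_of_nonneg_right
        · nlinarith
        · rw [sub_nonneg]
          exact (one_le_inv₀ hπ1).mpr hπ1le
      have h2 : Ym ^ 2 * (π0⁻¹ - 1) ≤ Y0 i ^ 2 * (π0⁻¹ - 1) := by
        apply mul_le_mul_of_nonneg_right
        · nlinarith
        · rw [sub_nonneg]
          exact (one_le_inv₀ hπ0).mpr hπ0le
      have h3 : 0 < Y1 i * Y0 i := mul_pos hY1i hY0i
      have hsplit : Ym ^ 2 * (π1⁻¹ + π0⁻¹ - 2)
          = Ym ^ 2 * (π1⁻¹ - 1) + Ym ^ 2 * (π0⁻¹ - 1) := by ring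
      linarith [h1, h2, h3, hsplit]
    · rw [if_neg hij]
      have b1 : Y1 i * Y1 j ≤ Y1 i / π1 * (Y1 j / π1) * PP i j := by
        calc Y1 i * Y1 j = Y1 i / π1 * (Y1 j / π1) * π1 ^ 2 := by
              field_simp
            _ ≤ Y1 i / π1 * (Y1 j / π1) * PP i j := by
              apply mul_le_mul_of_nonneg_left (hPPge i j)
              exact mul_nonneg (div_nonneg hY1i.le hπ1.le) (div_nonneg hY1j.le hπ1.le)
      have b4 : Y0 i * Y0 j ≤ Y0 i / π0 * (Y0 j / π0) * MM i j := by
        calc Y0 i * Y0 j = Y0 i / π0 * (Y0 j / π0) * π0 ^ 2 := by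
              field_simp
            _ ≤ Y0 i / π0 * (Y0 j / π0) * MM i j := by
              apply mul_le_mul_of_nonneg_left (hMMge i j)
              exact mul_nonneg (div_nonneg hY0i.le hπ0.le) (div_nonneg hY0j.le hπ0.le)
      have b2 : Y1 i / π1 * (Y0 j / π0) * PM i j ≤ Y1 i * Y0 j := by
        calc Y1 i / π1 * (Y0 j / π0) * PM i j
            ≤ Y1 i / π1 * (Y0 j / π0) * (π1 * π0) := by
              apply mul_le_mul_of_nonneg_left (hPMle i j)
              exact mul_nonneg (div_nonneg hY1i.le hπ1.le) (div_nonneg hY0j.le hπ0.le)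
          _ = Y1 i * Y0 j := by field_simp; try ring
      have b3 : Y0 i / π0 * (Y1 j / π1) * PM j i ≤ Y0 i * Y1 j := by
        calc Y0 i / π0 * (Y1 j / π1) * PM j i
            ≤ Y0 i / π0 * (Y1 j / π1) * (π1 * π0) := by
              apply mul_le_mul_of_nonneg_left (hPMle j i)
              exact mul_nonneg (div_nonneg hY0i.le hπ0.le) (div_nonneg hY1j.le hπ1.le)
          _ = Y0 i * Y1 j := by field_simp; try ring
      have hzero : Y1 i * Y1 j + Y0 i * Y0 j - Y1 i * Y0 j - Y0 i * Y1 j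
          - (Y1 i - Y0 i) * (Y1 j - Y0 j) = 0 := by ring
      linarith [b1, b2, b3, b4, hzero]
  -- aggregate
  have hVar : clusterVar p (id : V → V) (fullExp G true) (fullExp G false) Y
      = (Fintype.card V : ℝ)⁻¹ ^ 2 * (∑ i, ∑ j, (M i j - e i * e j)) := by
    unfold clusterVar
    simp only [hT]
    have hA : ∑ x : V → Bool, coinWt p x * (∑ i, t i x) ^ 2 = ∑ i, ∑ j, M i j := by
      have expand : ∀ x : V → Bool, coinWt p x * (∑ i, t i x) ^ 2
          = ∑ i, ∑ j, coinWt p x * (t i x * t j x) := by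
        intro x
        rw [sq, Finset.sum_mul_sum, Finset.mul_sum]
        exact Finset.sum_congr rfl fun i _ => Finset.mul_sum _ _ _
      rw [Finset.sum_congr rfl (fun x _ => expand x), Finset.sum_comm]
      exact Finset.sum_congr rfl fun i _ => Finset.sum_comm
    have hB : ∑ x : V → Bool, coinWt p x * (∑ i, t i x) = ∑ i, e i := by
      rw [Finset.sum_congr rfl (fun x _ => Finset.mul_sum _ _ _), Finset.sum_comm]
    have step1 : ∑ x : V → Bool, coinWt p x * ((Fintype.card V : ℝ)⁻¹ * ∑ i, t i x) ^ 2
        = (Fintype.card V : ℝ)⁻¹ ^ 2 * ∑ x : V → Bool, coinWt p x * (∑ i, t i x) ^ 2 := by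
      rw [Finset.mul_sum]
      exact Finset.sum_congr rfl fun x _ => by ring
    have step2 : ∑ x : V → Bool, coinWt p x * ((Fintype.card V : ℝ)⁻¹ * ∑ i, t i x)
        = (Fintype.card V : ℝ)⁻¹ * ∑ x : V → Bool, coinWt p x * (∑ i, t i x) := by
      rw [Finset.mul_sum]
      exact Finset.sum_congr rfl fun x _ => by ring
    rw [step1, step2, hA, hB]
    have hsq : (∑ i, e i) ^ 2 = ∑ i, ∑ j, e i * e j := by
      rw [sq, Finset.sum_mul_sum]
    have hsub : ∑ i, ∑ j, (M i j - e i * e j)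
        = (∑ i, ∑ j, M i j) - ∑ i, ∑ j, e i * e j := by
      rw [← Finset.sum_sub_distrib]
      exact Finset.sum_congr rfl fun i _ => Finset.sum_sub_distrib _ _
    rw [hsub, mul_pow, hsq]
    ring
  rw [hVar]
  have hsum : (Fintype.card V : ℝ) * D ≤ ∑ i, ∑ j, (M i j - e i * e j) := by
    calc (Fintype.card V : ℝ) * D = ∑ _i : V, D := by
          rw [Finset.sum_const, Finset.card_univ, nsmul_eq_mul]
      _ ≤ ∑ i, ∑ j, (M i j - e i * e j) := by
          apply Finset.sum_le_sum
          intro i _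
          calc D = ∑ j, (if i = j then D else 0) := by
                rw [Finset.sum_ite_eq]; simp
            _ ≤ ∑ j, (M i j - e i * e j) := Finset.sum_le_sum fun j _ => key i j
  calc Ym ^ 2 / (Fintype.card V : ℝ) * (π1⁻¹ + π0⁻¹ - 2)
      = (Fintype.card V : ℝ)⁻¹ ^ 2 * ((Fintype.card V : ℝ) * D) := by
        rw [hD]
        field_simp
    _ ≤ (Fintype.card V : ℝ)⁻¹ ^ 2 * (∑ i, ∑ j, (M i j - e i * e j)) := by
        apply mul_le_mul_of_nonneg_left hsum
        positivity

end
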